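/- Let K be a field of characteristic zero, A a commutative K-algebra, and D a locally finite K-derivation of A. If e is an idempotent of A lying in the image of D, then the ideal of A generated by e is contained in the image of D. -/

import Mathlib

open Finset

private def idemPow {A : Type*} [NonUnitalCommRing A] (e c : A) : ℕ → A
  | 0 => e
  | n+1 => c * idemPow e c n

private theorem auxA {K : Type*} [Field K] [CharZero K]
    {A : Type*} [NonUnitalCommRing A] [Module K A] [SMulCommClass K A A] [IsScalarTower K A A]
    (D : A →ₗ[K] A) (hder : ∀ a b : A, D (a * b) = D a * b + a * D b)
    (e c : A) (hidem : e * e = e) (hDe : D e = 0) (hc : D c = e) (hec : e * c = c) :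
    ∀ (k : ℕ) (y : A), y * e = y → (D ^ k) y = 0 → y ∈ LinearMap.range D := by
  have hecp : ∀ n, e * idemPow e c n = idemPow e c n := by
    intro n
    induction n with
    | zero => simpa [idemPow] using hidem
    | succ n ih => show e * (c * idemPow e c n) = _; rw [← mul_assoc, hec]; rfl
  have hDcp : ∀ n, D (idemPow e c (n + 1)) = (n + 1) • idemPow e c n := by
    intro n
    induction n with
    | zero =>
      show D (c * e) = _
      rw [hder, hDe, mul_zero, add_zero, hc, hidem]
      simp [idemPow]
    | succ n ih =>
      show D (c * idemPow e c (n + 1)) = _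
      rw [hder, hc, ih, hecp, mul_smul_comm]
      rw [succ_nsmul (idemPow e c (n + 1)) (n + 1)]
      show idemPow e c (n + 1) + (n + 1) • idemPow e c (n + 1) = _
      exact (add_comm _ _)
  intro k y hye hky
  set F : ℕ → A := fun i =>
    ((-1 : K) ^ i * ((Nat.factorial (i + 1) : K))⁻¹) • (idemPow e c (i + 1) * (D ^ i) y) with hF
  set g : ℕ → A := fun i =>
    ((-1 : K) ^ i * ((Nat.factorial i : K))⁻¹) • (idemPow e c i * (D ^ i) y) with hg
  refine ⟨∑ i ∈ range k, F i, ?_⟩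
  have hterm : ∀ i, D (F i) = g i - g (i + 1) := by
    intro i
    have hD' : D ((D ^ i) y) = (D ^ (i + 1)) y := by rw [pow_succ' D i]; rfl
    rw [hF, map_smul, hder, hDcp, hD', smul_add]
    have e1 : (i + 1 : ℕ) • idemPow e c i * (D ^ i) y
        = ((i + 1 : ℕ) : K) • (idemPow e c i * (D ^ i) y) := by
      rw [smul_mul_assoc, Nat.cast_smul_eq_nsmul]
    rw [e1, smul_smul]
    have h0 : ((Nat.factorial i : K)) ≠ 0 := Nat.cast_ne_zero.mpr (Nat.factorial_ne_zero i)
    have h1 : (((i + 1 : ℕ) : K)) ≠ 0 := Nat.cast_ne_zero.mpr (Nat.succ_ne_zero i)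
    have hfac : (-1 : K) ^ i * ((Nat.factorial (i + 1) : K))⁻¹ * ((i + 1 : ℕ) : K)
        = (-1 : K) ^ i * ((Nat.factorial i : K))⁻¹ := by
      rw [Nat.factorial_succ, Nat.cast_mul, mul_inv]
      push_cast at h1 ⊢
      field_simp
    have e2 : ((-1 : K) ^ i * ((Nat.factorial (i + 1) : K))⁻¹)
        = -((-1 : K) ^ (i + 1) * ((Nat.factorial (i + 1) : K))⁻¹) := by
      rw [pow_succ]; ring
    rw [hfac, e2, neg_smul, ← sub_eq_add_neg]
  calc D (∑ i ∈ range k, F i) = ∑ i ∈ range k, D (F i) := map_sum D _ _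
    _ = ∑ i ∈ range k, (g i - g (i + 1)) := Finset.sum_congr rfl fun i _ => hterm i
    _ = g 0 - g k := Finset.sum_range_sub' g k
    _ = y := by
        simp only [hg, hky, mul_zero, smul_zero, sub_zero, pow_zero, Nat.factorial_zero,
          Nat.cast_one, inv_one, one_mul, one_smul, Module.End.one_apply]
        show e * y = y
        rw [mul_comm, hye]

/-- Let `K` be a field of characteristic zero, `A` a commutative
`K`-algebra, and `D` a locally finite `K`-derivation of `A`.  If `e` is an idempotent of
`A` lying in the image of `D`, then the ideal of `A` generated by `e` is contained in the
image of `D`. -/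
theorem image_of_locally_finite_derivation_contains_ideal_of_idempotent_comm
    {K : Type*} [Field K] [CharZero K]
    {A : Type*} [NonUnitalCommRing A] [Module K A] [SMulCommClass K A A] [IsScalarTower K A A]
    (D : A →ₗ[K] A)
    (hder : ∀ a b : A, D (a * b) = D a * b + a * D b)
    (hLF : ∀ a : A,
      FiniteDimensional K (Submodule.span K (Set.range fun i : ℕ => (D ^ i) a)))
    (e : A) (hidem : e * e = e) (him : e ∈ LinearMap.range D) :
    ∀ x ∈ TwoSidedIdeal.span {e}, x ∈ LinearMap.range D := by
  obtain ⟨b, hb⟩ := him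
  have hDe : D e = 0 := by
    have h1 : D e = D e * e + e * D e := by rw [← hder, hidem]
    have h3 : e * D e = e * D e + e * D e := by
      conv_lhs => rw [h1]
      rw [mul_add, mul_comm (D e) e, ← mul_assoc, hidem]
    have h4 : (0 : A) = e * D e := add_left_cancel ((add_zero (e * D e)).trans h3)
    rw [h1, mul_comm (D e) e, ← h4, add_zero]
  have hstep : ∀ v : A, v * e = v → D v * e = D v := by
    intro v hv
    have h : D v = D v * e + v * D e := by rw [← hder, hv]
    rw [hDe, mul_zero, add_zero] at h
    exact h.symm
  have hce : e * (e * b) = e * b := by rw [← mul_assoc, hidem]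
  have hc : D (e * b) = e := by rw [hder, hDe, zero_mul, zero_add, hb, hidem]
  have key : ∀ x : A, x * e = x → x ∈ LinearMap.range D := by
    intro x hxe
    classical
    have hDi : ∀ i : ℕ, (D ^ i) x * e = (D ^ i) x := by
      intro i
      induction i with
      | zero => simpa using hxe
      | succ i ih =>
        have h5 : (D ^ (i + 1)) x = D ((D ^ i) x) := by rw [pow_succ' D i]; rfl
        rw [h5]; exact hstep _ ih
    haveI := hLF x
    set V := Submodule.span K (Set.range fun i : ℕ => (D ^ i) x) with hV
    set n := Module.finrank K V with hn
    have hdep : ¬ LinearIndependent K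
        (fun i : Fin (n + 1) =>
          (⟨(D ^ (i : ℕ)) x, Submodule.subset_span ⟨(i : ℕ), rfl⟩⟩ : V)) := by
      intro h
      have h2 := h.fintype_card_le_finrank
      simp only [Fintype.card_fin] at h2
      omega
    obtain ⟨g, hgsum, i₀, hi₀⟩ := Fintype.not_linearIndependent_iff.mp hdep
    have hg0 : ∑ i : Fin (n + 1), g i • (D ^ (i : ℕ)) x = 0 := by
      have h6 := congrArg (Subtype.val) hgsum
      simpa using h6
    set G : ℕ → K := fun i => if h : i < n + 1 then g ⟨i, h⟩ else 0 with hG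
    have hGfin : ∀ i : Fin (n + 1), G (i : ℕ) = g i := fun i => by simp [hG, i.isLt]; intro h; exact absurd i.isLt (by omega)
    have hGrel : ∑ i ∈ range (n + 1), G i • (D ^ i) x = 0 := by
      calc ∑ i ∈ range (n + 1), G i • (D ^ i) x
          = ∑ i : Fin (n + 1), G (i : ℕ) • (D ^ (i : ℕ)) x := Finset.sum_range _
        _ = ∑ i : Fin (n + 1), g i • (D ^ (i : ℕ)) x :=
            Finset.sum_congr rfl fun i _ => by rw [hGfin i]
        _ = 0 := hg0
    have hex : ∃ j, G j ≠ 0 := ⟨(i₀ : ℕ), by rw [hGfin i₀]; exact hi₀⟩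
    set j := Nat.find hex with hj
    have hjne : G j ≠ 0 := Nat.find_spec hex
    have hjmin : ∀ i, i < j → G i = 0 := fun i hi => by
      have h7 := Nat.find_min hex hi
      simpa using h7
    set y := ∑ i ∈ range (n + 1), G (j + i) • (D ^ i) x with hy
    have hye : y * e = y := by
      rw [hy, Finset.sum_mul]
      exact Finset.sum_congr rfl fun i _ => by rw [smul_mul_assoc, hDi]
    have hyj : (D ^ j) y = 0 := by
      have h1 : (D ^ j) y = ∑ i ∈ range (n + 1), G (j + i) • (D ^ (j + i)) x := by
        rw [hy, map_sum]
        exact Finset.sum_congr rfl fun i _ => by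
          rw [map_smul, ← Module.End.mul_apply, ← pow_add]
      have h2 : ∑ i ∈ Finset.Ico j (j + (n + 1)), G i • (D ^ i) x
          = ∑ i ∈ range (n + 1), G (j + i) • (D ^ (j + i)) x := by
        rw [Finset.sum_Ico_eq_sum_range, Nat.add_sub_cancel_left]
      have h3 : ∑ i ∈ Finset.Ico j (j + (n + 1)), G i • (D ^ i) x
          = ∑ i ∈ range (j + (n + 1)), G i • (D ^ i) x := by
        rw [Finset.range_eq_Ico,
          ← Finset.sum_Ico_consecutive _ (Nat.zero_le j) (Nat.le_add_right _ _)]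
        have h8 : ∑ i ∈ Finset.Ico 0 j, G i • (D ^ i) x = 0 :=
          Finset.sum_eq_zero fun i hi => by
            rw [hjmin i (Finset.mem_Ico.mp hi).2, zero_smul]
        rw [h8, zero_add]
      have h4 : ∑ i ∈ range (j + (n + 1)), G i • (D ^ i) x
          = ∑ i ∈ range (n + 1), G i • (D ^ i) x := by
        refine (Finset.sum_subset (Finset.range_subset_range.mpr (Nat.le_add_left _ _)) ?_).symm
        intro i _ hi
        rw [Finset.mem_range, not_lt] at hi
        have h9 : G i = 0 := by
          simp only [hG]
          rw [dif_neg (show ¬ i < n + 1 by omega)]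
        rw [h9, zero_smul]
      rw [h1, ← h2, h3, h4, hGrel]
    obtain ⟨z, hz⟩ := auxA D hder e (e * b) hidem hDe hc hce j y hye hyj
    have hy2 : y = D (∑ i ∈ range n, G (j + i + 1) • (D ^ i) x) + G j • x := by
      rw [hy, Finset.sum_range_succ']
      congr 1
      · rw [map_sum]
        refine Finset.sum_congr rfl fun i _ => ?_
        rw [map_smul, ← Nat.add_assoc]
        congr 1
        rw [pow_succ' D i]
        rfl
    have hgx : G j • x = y - D (∑ i ∈ range n, G (j + i + 1) • (D ^ i) x) :=
      eq_sub_of_add_eq' hy2.symm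
    have hmem : G j • x ∈ LinearMap.range D := by
      rw [hgx]
      exact Submodule.sub_mem _ ⟨z, hz⟩ ⟨_, rfl⟩
    have hxx : x = (G j)⁻¹ • (G j • x) := by
      rw [smul_smul, inv_mul_cancel₀ hjne, one_smul]
    rw [hxx]
    exact Submodule.smul_mem _ _ hmem
  intro x hx
  rw [TwoSidedIdeal.mem_span_iff] at hx
  refine key x ?_
  have h10 := hx (TwoSidedIdeal.mk' {a : A | a * e = a}
      (by simp)
      (fun {a b} ha hb => by
        simp only [Set.mem_setOf_eq] at *; rw [add_mul, ha, hb])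
      (fun {a} ha => by
        simp only [Set.mem_setOf_eq] at *; rw [neg_mul, ha])
      (fun {a b} hb => by
        simp only [Set.mem_setOf_eq] at *; rw [mul_assoc, hb])
      (fun {a b} ha => by
        simp only [Set.mem_setOf_eq] at *; rw [mul_right_comm, ha]))
      (by
        intro t ht
        simp only [Set.mem_singleton_iff] at ht
        subst ht
        rw [SetLike.mem_coe, TwoSidedIdeal.mem_mk']
        exact hidem)
  rwa [TwoSidedIdeal.mem_mk'] at h10
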